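/- Let n be even, let a_1, …, a_n be positive integers, and let W = Σ_i a_i. Define an instance of Seat Arrangement with agents P = {p_1, …, p_n} ∪ {c_1, c_2} and symmetric preferences f_{p_i}(c_j) = f_{c_j}(p_i) = a_i for all i and j ∈ {1,2}, with all other preferences 0; the seat graph is the disjoint union of two stars, each consisting of a center adjacent to n/2 leaves. Then an envy-free arrangement exists if and only if {1, …, n} can be partitioned into sets I_1, I_2 with |I_1| = |I_2| = n/2 and Σ_{i ∈ I_1} a_i = Σ_{i ∈ I_2} a_i = W/2. -/

import Mathlib

open scoped Classical

noncomputable section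

namespace SeatArrangement

variable {P V : Type*}

/-- The utility of agent `p` under arrangement `π`:
the sum, over the seat-graph neighbors `v` of `π p`, of `p`'s preference for the agent seated
at `v`. -/
def utility [Fintype V] (G : SimpleGraph V) (f : P → P → ℝ) (π : P ≃ V) (p : P) : ℝ :=
  ∑ v : V, if G.Adj (π p) v then f p (π.symm v) else 0

/-- The social welfare of an arrangement: the sum of the utilities of all agents. -/
def sw [Fintype P] [Fintype V] (G : SimpleGraph V) (f : P → P → ℝ) (π : P ≃ V) : ℝ :=
  ∑ p : P, utility G f π p

/-- The `(p,q)`-swap arrangement of `π`. -/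
def swapArr (π : P ≃ V) (p q : P) : P ≃ V := (Equiv.swap p q).trans π

/-- `{p, q}` is a blocking pair for `π`: both agents strictly improve by swapping seats. -/
def blocking [Fintype V] (G : SimpleGraph V) (f : P → P → ℝ) (π : P ≃ V) (p q : P) : Prop :=
  p ≠ q ∧ utility G f π p < utility G f (swapArr π p q) p
        ∧ utility G f π q < utility G f (swapArr π p q) q

/-- An arrangement is stable if it has no blocking pair. -/
def stable [Fintype V] (G : SimpleGraph V) (f : P → P → ℝ) (π : P ≃ V) : Prop :=
  ∀ p q : P, ¬ blocking G f π p q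

/-- An arrangement is envy-free if no agent would strictly improve by taking
another agent's seat (via a swap). -/
def envyFree [Fintype V] (G : SimpleGraph V) (f : P → P → ℝ) (π : P ≃ V) : Prop :=
  ∀ p q : P, p ≠ q → utility G f (swapArr π p q) p ≤ utility G f π p

/-- The least utility of an agent under `π` (for a finite nonempty set of agents, the
infimum of the range of utilities is the minimum utility). -/
def minUtil [Fintype V] (G : SimpleGraph V) (f : P → P → ℝ) (π : P ≃ V) : ℝ :=
  sInf (Set.range (utility G f π))

/-- A maximin arrangement maximizes the least utility of an agent. -/
def maximin [Fintype V] (G : SimpleGraph V) (f : P → P → ℝ) (πf : P ≃ V) : Prop :=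
  ∀ π : P ≃ V, minUtil G f π ≤ minUtil G f πf

/-- A maximum arrangement maximizes the social welfare. -/
def maximum [Fintype P] [Fintype V] (G : SimpleGraph V) (f : P → P → ℝ) (πm : P ≃ V) : Prop :=
  ∀ π : P ≃ V, sw G f π ≤ sw G f πm

end SeatArrangement

open SeatArrangement

/-- Seats for STATEMENT 18: two star centers (`Fin 2`) and, for each center `j : Fin 2`,
`n/2` leaves `(j, ·)`. -/
abbrev StarSeats (n : ℕ) := Fin 2 ⊕ (Fin 2 × Fin (n / 2))

/-- The seat graph for STATEMENT 18: the disjoint union of two stars, each consisting of a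
center adjacent to `n/2` leaves. -/
def twoStars (n : ℕ) : SimpleGraph (StarSeats n) where
  Adj x y :=
    match x, y with
    | .inl j, .inr l => j = l.1
    | .inr l, .inl j => j = l.1
    | _, _ => False
  symm := by
    constructor
    rintro (x | x) (y | y) h <;> simp_all
  loopless := by
    constructor
    rintro (x | x) h <;> simp_all

/-- Preferences for STATEMENT 18: symmetric preferences where element agent `p_i` and each
center agent `c_j` mutually have preference `a_i`; all other preferences are 0. -/
def prefs18 (n : ℕ) (a : Fin n → ℕ) : (Fin n ⊕ Fin 2) → (Fin n ⊕ Fin 2) → ℝ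
  | .inl i, .inr _ => a i
  | .inr _, .inl i => a i
  | _, _ => 0

section Lemmas

variable {n : ℕ} {a : Fin n → ℕ} {π : (Fin n ⊕ Fin 2) ≃ StarSeats n}

lemma prefs_nonneg (p q : Fin n ⊕ Fin 2) : 0 ≤ prefs18 n a p q := by
  cases p <;> cases q <;> simp [prefs18]

lemma util_center (f : (Fin n ⊕ Fin 2) → (Fin n ⊕ Fin 2) → ℝ)
    (π : (Fin n ⊕ Fin 2) ≃ StarSeats n) (p : Fin n ⊕ Fin 2) (j : Fin 2)
    (h : π p = Sum.inl j) :
    utility (twoStars n) f π p = ∑ k : Fin (n / 2), f p (π.symm (Sum.inr (j, k))) := by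
  unfold utility
  rw [h, Fintype.sum_sum_type, Fintype.sum_prod_type]
  simp only [twoStars]
  fin_cases j <;> simp

lemma util_leaf (f : (Fin n ⊕ Fin 2) → (Fin n ⊕ Fin 2) → ℝ)
    (π : (Fin n ⊕ Fin 2) ≃ StarSeats n) (p : Fin n ⊕ Fin 2) (j : Fin 2) (k : Fin (n / 2))
    (h : π p = Sum.inr (j, k)) :
    utility (twoStars n) f π p = f p (π.symm (Sum.inl j)) := by
  unfold utility
  rw [h, Fintype.sum_sum_type, Fintype.sum_prod_type]
  simp only [twoStars]
  simp [Finset.sum_ite_eq, eq_comm]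

lemma swapArr_symm_apply (π : (Fin n ⊕ Fin 2) ≃ StarSeats n) (p q : Fin n ⊕ Fin 2)
    (v : StarSeats n) : (swapArr π p q).symm v = Equiv.swap p q (π.symm v) := by
  simp only [swapArr, Equiv.symm_trans_apply, Equiv.symm_swap]
  congr!

lemma swapArr_apply_fst (π : (Fin n ⊕ Fin 2) ≃ StarSeats n) (p q : Fin n ⊕ Fin 2) :
    (swapArr π p q) p = π q := by
  simp [swapArr]

end Lemmas
section Lemmas2

variable {n : ℕ} {a : Fin n → ℕ} {π : (Fin n ⊕ Fin 2) ≃ StarSeats n}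

lemma util_swap_center (f : (Fin n ⊕ Fin 2) → (Fin n ⊕ Fin 2) → ℝ) (p q : Fin n ⊕ Fin 2)
    (j : Fin 2) (hq : π q = Sum.inl j) :
    utility (twoStars n) f (swapArr π p q) p
      = ∑ k : Fin (n / 2), f p (Equiv.swap p q (π.symm (Sum.inr (j, k)))) := by
  rw [util_center f _ p j (by rw [swapArr_apply_fst, hq])]
  simp only [swapArr_symm_apply]

lemma util_swap_leaf (f : (Fin n ⊕ Fin 2) → (Fin n ⊕ Fin 2) → ℝ) (p q : Fin n ⊕ Fin 2)
    (j : Fin 2) (k : Fin (n / 2)) (hq : π q = Sum.inr (j, k)) :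
    utility (twoStars n) f (swapArr π p q) p
      = f p (Equiv.swap p q (π.symm (Sum.inl j))) := by
  rw [util_leaf f _ p j k (by rw [swapArr_apply_fst, hq])]
  simp only [swapArr_symm_apply]

/-- L1: two distinct leaves of the same star have mutual preference 0. -/
lemma L1 (hEF : envyFree (twoStars n) (prefs18 n a) π) (j : Fin 2) (k k' : Fin (n / 2))
    (hkk' : k ≠ k') :
    prefs18 n a (π.symm (Sum.inr (j, k))) (π.symm (Sum.inr (j, k'))) = 0 := by
  set p := π.symm (Sum.inr (j, k)) with hp
  set q := π.symm (Sum.inl j) with hq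
  have hπp : π p = Sum.inr (j, k) := π.apply_symm_apply _
  have hπq : π q = Sum.inl j := π.apply_symm_apply _
  have hpq : p ≠ q := by
    intro h; rw [h, hπq] at hπp; exact absurd hπp (by simp)
  have hle := hEF p q hpq
  rw [util_leaf _ π p j k hπp, util_swap_center _ p q j hπq] at hle
  have hsummand : ∀ k'' : Fin (n / 2),
      prefs18 n a p (Equiv.swap p q (π.symm (Sum.inr (j, k''))))
        = if k'' = k then prefs18 n a p q
          else prefs18 n a p (π.symm (Sum.inr (j, k''))) := by
    intro k''
    by_cases h : k'' = k
    · subst h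
      rw [if_pos rfl, hp, Equiv.swap_apply_left]
    · rw [if_neg h, Equiv.swap_apply_of_ne_of_ne
        (π.symm.injective.ne (by simp [h])) (π.symm.injective.ne (by simp))]
  rw [Finset.sum_congr rfl (fun k'' _ => hsummand k''),
    ← Finset.add_sum_erase _ _ (Finset.mem_univ k), if_pos rfl] at hle
  have herase : ∑ k'' ∈ Finset.univ.erase k,
      (if k'' = k then prefs18 n a p q else prefs18 n a p (π.symm (Sum.inr (j, k''))))
      = ∑ k'' ∈ Finset.univ.erase k, prefs18 n a p (π.symm (Sum.inr (j, k''))) :=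
    Finset.sum_congr rfl fun x hx => if_neg (Finset.ne_of_mem_erase hx)
  rw [herase] at hle
  have hnn : ∀ x ∈ Finset.univ.erase k, (0:ℝ) ≤ prefs18 n a p (π.symm (Sum.inr (j, x))) :=
    fun x _ => prefs_nonneg _ _
  have hzero := (Finset.sum_eq_zero_iff_of_nonneg hnn).mp
    (le_antisymm (by linarith [hle]) (Finset.sum_nonneg hnn))
  exact hzero k' (Finset.mem_erase.mpr ⟨hkk'.symm, Finset.mem_univ _⟩)

/-- L2: a leaf agent doesn't envy the other star's center occupant. -/
lemma L2 (hEF : envyFree (twoStars n) (prefs18 n a) π) (j j' : Fin 2) (hjj' : j ≠ j')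
    (k : Fin (n / 2)) :
    ∑ k'' : Fin (n / 2), prefs18 n a (π.symm (Sum.inr (j, k))) (π.symm (Sum.inr (j', k'')))
      ≤ prefs18 n a (π.symm (Sum.inr (j, k))) (π.symm (Sum.inl j)) := by
  set p := π.symm (Sum.inr (j, k)) with hp
  set q := π.symm (Sum.inl j') with hq
  have hπp : π p = Sum.inr (j, k) := π.apply_symm_apply _
  have hπq : π q = Sum.inl j' := π.apply_symm_apply _
  have hpq : p ≠ q := by
    intro h; rw [h, hπq] at hπp; exact absurd hπp (by simp)
  have hle := hEF p q hpq
  rw [util_leaf _ π p j k hπp, util_swap_center _ p q j' hπq] at hle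
  have hsummand : ∀ k'' : Fin (n / 2),
      Equiv.swap p q (π.symm (Sum.inr (j', k''))) = π.symm (Sum.inr (j', k'')) := fun k'' =>
    Equiv.swap_apply_of_ne_of_ne
      (π.symm.injective.ne (by simp [Prod.ext_iff]; intro h; exact absurd h.symm hjj'))
      (π.symm.injective.ne (by simp))
  rw [Finset.sum_congr rfl (fun k'' _ => by rw [hsummand k''])] at hle
  exact hle

/-- L3: a center occupant doesn't envy the other center occupant. -/
lemma L3 (hEF : envyFree (twoStars n) (prefs18 n a) π) (j j' : Fin 2) (hjj' : j ≠ j') :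
    ∑ k'' : Fin (n / 2), prefs18 n a (π.symm (Sum.inl j)) (π.symm (Sum.inr (j', k'')))
      ≤ ∑ k'' : Fin (n / 2), prefs18 n a (π.symm (Sum.inl j)) (π.symm (Sum.inr (j, k''))) := by
  set p := π.symm (Sum.inl j) with hp
  set q := π.symm (Sum.inl j') with hq
  have hπp : π p = Sum.inl j := π.apply_symm_apply _
  have hπq : π q = Sum.inl j' := π.apply_symm_apply _
  have hpq : p ≠ q := by
    intro h; rw [h, hπq] at hπp; exact hjj' (by injection hπp.symm)
  have hle := hEF p q hpq
  rw [util_center _ π p j hπp, util_swap_center _ p q j' hπq] at hle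
  have hsummand : ∀ k'' : Fin (n / 2),
      Equiv.swap p q (π.symm (Sum.inr (j', k''))) = π.symm (Sum.inr (j', k'')) := fun k'' =>
    Equiv.swap_apply_of_ne_of_ne
      (π.symm.injective.ne (by simp)) (π.symm.injective.ne (by simp))
  rw [Finset.sum_congr rfl (fun k'' _ => by rw [hsummand k''])] at hle
  exact hle

/-- L4: a leaf agent doesn't envy a leaf agent of the other star. -/
lemma L4 (hEF : envyFree (twoStars n) (prefs18 n a) π) (j j' : Fin 2) (hjj' : j ≠ j')
    (k k' : Fin (n / 2)) :
    prefs18 n a (π.symm (Sum.inr (j, k))) (π.symm (Sum.inl j'))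
      ≤ prefs18 n a (π.symm (Sum.inr (j, k))) (π.symm (Sum.inl j)) := by
  set p := π.symm (Sum.inr (j, k)) with hp
  set q := π.symm (Sum.inr (j', k')) with hq
  have hπp : π p = Sum.inr (j, k) := π.apply_symm_apply _
  have hπq : π q = Sum.inr (j', k') := π.apply_symm_apply _
  have hpq : p ≠ q := by
    intro h; rw [h, hπq] at hπp
    exact hjj' (by injection hπp.symm with h2; exact congrArg Prod.fst h2)
  have hle := hEF p q hpq
  rw [util_leaf _ π p j k hπp, util_swap_leaf _ p q j' k' hπq] at hle
  rwa [Equiv.swap_apply_of_ne_of_ne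
    (π.symm.injective.ne (by simp)) (π.symm.injective.ne (by simp))] at hle

/-- L5: a center occupant doesn't envy a leaf agent of the other star. -/
lemma L5 (hEF : envyFree (twoStars n) (prefs18 n a) π) (j j' : Fin 2) (hjj' : j ≠ j')
    (k' : Fin (n / 2)) :
    prefs18 n a (π.symm (Sum.inl j)) (π.symm (Sum.inl j'))
      ≤ ∑ k'' : Fin (n / 2), prefs18 n a (π.symm (Sum.inl j)) (π.symm (Sum.inr (j, k''))) := by
  set p := π.symm (Sum.inl j) with hp
  set q := π.symm (Sum.inr (j', k')) with hq
  have hπp : π p = Sum.inl j := π.apply_symm_apply _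
  have hπq : π q = Sum.inr (j', k') := π.apply_symm_apply _
  have hpq : p ≠ q := by
    intro h; rw [h, hπq] at hπp; exact absurd hπp (by simp)
  have hle := hEF p q hpq
  rw [util_center _ π p j hπp, util_swap_leaf _ p q j' k' hπq] at hle
  rwa [Equiv.swap_apply_of_ne_of_ne
    (π.symm.injective.ne (by simp; intro h; exact hjj' h.symm)) (π.symm.injective.ne (by simp))] at hle

end Lemmas2
lemma fin2_cases : ∀ (x y z : Fin 2), x ≠ y → z = x ∨ z = y := by decide

lemma fin2_exists_ne : ∀ j : Fin 2, ∃ j', j' ≠ j := by decide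

lemma two_case {n : ℕ} (hn2 : n = 2) (a : Fin n → ℕ) (i i'' : Fin n) (hne : i ≠ i'')
    (heq : a i = a i'') :
    ∃ I : Finset (Fin n), 2 * I.card = n ∧ 2 * ∑ x ∈ I, a x = ∑ x, a x := by
  subst hn2
  refine ⟨{i}, by simp, ?_⟩
  rw [Finset.sum_singleton, Fin.sum_univ_two]
  fin_cases i <;> fin_cases i'' <;> simp_all <;> omega

section Fwd

variable {n : ℕ} {a : Fin n → ℕ} {π : (Fin n ⊕ Fin 2) ≃ StarSeats n}

lemma case1 (hn : Even n) (hEF : envyFree (twoStars n) (prefs18 n a) π) (j0 j1 : Fin 2)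
    (h0 : π (Sum.inr 0) = Sum.inl j0) (h1 : π (Sum.inr 1) = Sum.inl j1) :
    ∃ I : Finset (Fin n), 2 * I.card = n ∧ 2 * ∑ x ∈ I, a x = ∑ x, a x := by
  have hj01 : j0 ≠ j1 := by
    intro h; subst h
    have := π.injective (h0.trans h1.symm)
    simp at this
  have helem : ∀ j k, ∃ i, π.symm (Sum.inr (j, k)) = Sum.inl i := by
    intro j k
    rcases h : π.symm (Sum.inr (j, k)) with i | b
    · exact ⟨i, rfl⟩
    · exfalso
      have hb : π (Sum.inr b) = Sum.inr (j, k) := by rw [← h, π.apply_symm_apply]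
      rcases fin2_cases 0 1 b (by decide) with rfl | rfl
      · rw [h0] at hb; exact absurd hb (by simp)
      · rw [h1] at hb; exact absurd hb (by simp)
  choose e he using helem
  have heinj : ∀ j k j' k', e j k = e j' k' → j = j' ∧ k = k' := by
    intro j k j' k' h
    have : π.symm (Sum.inr (j, k)) = π.symm (Sum.inr (j', k')) := by
      rw [he, he, h]
    have := π.symm.injective this
    injection this with h2
    exact ⟨congrArg Prod.fst h2, congrArg Prod.snd h2⟩
  have hσ0 : π.symm (Sum.inl j0) = Sum.inr 0 := by rw [← h0, π.symm_apply_apply]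
  have hσ1 : π.symm (Sum.inl j1) = Sum.inr 1 := by rw [← h1, π.symm_apply_apply]
  have l3a : (∑ k, (a (e j1 k) : ℝ)) ≤ ∑ k, (a (e j0 k) : ℝ) := by
    simpa [hσ0, he, prefs18] using L3 hEF j0 j1 hj01
  have l3b : (∑ k, (a (e j0 k) : ℝ)) ≤ ∑ k, (a (e j1 k) : ℝ) := by
    simpa [hσ1, he, prefs18] using L3 hEF j1 j0 hj01.symm
  have hS : ∑ k, a (e j0 k) = ∑ k, a (e j1 k) := by
    have := le_antisymm l3b l3a
    exact_mod_cast this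
  set I : Finset (Fin n) := Finset.image (e j0) Finset.univ with hI
  set I1 : Finset (Fin n) := Finset.image (e j1) Finset.univ with hI1
  have hIcard : I.card = n / 2 := by
    rw [hI, Finset.card_image_of_injective _ (fun x y h => (heinj _ _ _ _ h).2)]
    simp
  have hIsum : ∑ i ∈ I, a i = ∑ k, a (e j0 k) :=
    Finset.sum_image (fun x _ y _ h => (heinj _ _ _ _ h).2)
  have hI1sum : ∑ i ∈ I1, a i = ∑ k, a (e j1 k) :=
    Finset.sum_image (fun x _ y _ h => (heinj _ _ _ _ h).2)
  have hdisj : Disjoint I I1 := by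
    rw [Finset.disjoint_left]
    rintro x hx hx'
    rw [hI, Finset.mem_image] at hx
    rw [hI1, Finset.mem_image] at hx'
    obtain ⟨k, _, hk⟩ := hx
    obtain ⟨k', _, hk'⟩ := hx'
    exact hj01 (heinj _ _ _ _ (hk.trans hk'.symm)).1
  have huniv : I ∪ I1 = Finset.univ := by
    rw [Finset.eq_univ_iff_forall]
    intro i
    rcases hseat : π (Sum.inl i) with j | ⟨j, k⟩
    · exfalso
      rcases fin2_cases j0 j1 j hj01 with rfl | rfl
      · exact absurd (π.injective (hseat.trans h0.symm)) (by simp)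
      · exact absurd (π.injective (hseat.trans h1.symm)) (by simp)
    · have : π.symm (Sum.inr (j, k)) = Sum.inl i := by rw [← hseat, π.symm_apply_apply]
      rw [he] at this
      injection this with h2
      rcases fin2_cases j0 j1 j hj01 with rfl | rfl
      · exact Finset.mem_union_left _ (Finset.mem_image.mpr ⟨k, Finset.mem_univ _, h2⟩)
      · exact Finset.mem_union_right _ (Finset.mem_image.mpr ⟨k, Finset.mem_univ _, h2⟩)
  have htotal : ∑ x, a x = ∑ i ∈ I, a i + ∑ i ∈ I1, a i := by
    rw [← Finset.sum_union hdisj, huniv]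
  refine ⟨I, ?_, ?_⟩
  · obtain ⟨c, hc⟩ := hn
    omega
  · omega

end Fwd
section Fwd2

variable {n : ℕ} {a : Fin n → ℕ} {π : (Fin n ⊕ Fin 2) ≃ StarSeats n}

lemma case2 (hn : Even n) (hpos : ∀ i, 0 < a i)
    (hEF : envyFree (twoStars n) (prefs18 n a) π) (b b' j j' : Fin 2) (k' : Fin (n / 2))
    (hbb' : b ≠ b') (hb : π (Sum.inr b) = Sum.inl j) (hb' : π (Sum.inr b') = Sum.inr (j', k')) :
    ∃ I : Finset (Fin n), 2 * I.card = n ∧ 2 * ∑ x ∈ I, a x = ∑ x, a x := by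
  have hσb : π.symm (Sum.inl j) = Sum.inr b := by rw [← hb, π.symm_apply_apply]
  have hσb' : π.symm (Sum.inr (j', k')) = Sum.inr b' := by rw [← hb', π.symm_apply_apply]
  have hm1 : 1 ≤ n / 2 := k'.pos
  rcases Nat.lt_or_ge (n / 2) 2 with hm | hm
  · -- n / 2 = 1, hence n = 2
    have hn2 : n = 2 := by obtain ⟨c, hc⟩ := hn; omega
    have hallk : ∀ k : Fin (n / 2), k = k' := by
      intro k; apply Fin.ext; have := k.isLt; have := k'.isLt; omega
    have hunivk : (Finset.univ : Finset (Fin (n / 2))) = {k'} := by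
      ext k; simp [hallk k]
    by_cases hjj : j' = j
    · -- both centers in star j; the other star is all elements: contradiction
      subst hjj
      obtain ⟨j'', hj''⟩ := fin2_exists_ne j'
      have hx : ∃ i, π.symm (Sum.inl j'') = Sum.inl i := by
        rcases h : π.symm (Sum.inl j'') with i | c
        · exact ⟨i, rfl⟩
        · exfalso
          have hc : π (Sum.inr c) = Sum.inl j'' := by rw [← h, π.apply_symm_apply]
          rcases fin2_cases b b' c hbb' with rfl | rfl
          · rw [hb] at hc; exact hj'' (by injection hc with h2; exact h2.symm)
          · rw [hb'] at hc; exact absurd hc (by simp)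
      obtain ⟨i, hi⟩ := hx
      have hu : ∃ i', π.symm (Sum.inr (j'', k')) = Sum.inl i' := by
        rcases h : π.symm (Sum.inr (j'', k')) with i' | c
        · exact ⟨i', rfl⟩
        · exfalso
          have hc : π (Sum.inr c) = Sum.inr (j'', k') := by rw [← h, π.apply_symm_apply]
          rcases fin2_cases b b' c hbb' with rfl | rfl
          · rw [hb] at hc; exact absurd hc (by simp)
          · rw [hb'] at hc
            injection hc with h2
            exact hj'' (congrArg Prod.fst h2).symm
      obtain ⟨i', hi'⟩ := hu
      have hl2 := L2 hEF j'' j' hj'' k'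
      rw [hunivk, Finset.sum_singleton, hi', hi, hσb'] at hl2
      simp only [prefs18] at hl2
      have := hpos i'
      have : (0:ℝ) < a i' := by exact_mod_cast this
      linarith
    · -- centers of the two stars: `Sum.inr b` at `j`, element at `j'`
      have hx : ∃ i'', π.symm (Sum.inl j') = Sum.inl i'' := by
        rcases h : π.symm (Sum.inl j') with i'' | c
        · exact ⟨i'', rfl⟩
        · exfalso
          have hc : π (Sum.inr c) = Sum.inl j' := by rw [← h, π.apply_symm_apply]
          rcases fin2_cases b b' c hbb' with rfl | rfl
          · rw [hb] at hc; exact hjj (by injection hc with h2; exact h2.symm)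
          · rw [hb'] at hc; exact absurd hc (by simp)
      obtain ⟨i'', hi''⟩ := hx
      have hw : ∃ i, π.symm (Sum.inr (j, k')) = Sum.inl i := by
        rcases h : π.symm (Sum.inr (j, k')) with i | c
        · exact ⟨i, rfl⟩
        · exfalso
          have hc : π (Sum.inr c) = Sum.inr (j, k') := by rw [← h, π.apply_symm_apply]
          rcases fin2_cases b b' c hbb' with rfl | rfl
          · rw [hb] at hc; exact absurd hc (by simp)
          · rw [hb'] at hc
            injection hc with h2
            exact hjj (congrArg Prod.fst h2)
      obtain ⟨i, hi⟩ := hw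
      have hjne : j ≠ j' := fun h => hjj h.symm
      have hl5 := L5 hEF j j' hjne k'
      rw [hunivk, Finset.sum_singleton, hσb, hi'', hi] at hl5
      simp only [prefs18] at hl5
      have hl2 := L2 hEF j' j hjj k'
      have hsum : ∀ k'' : Fin (n/2), π.symm (Sum.inr (j, k'')) = Sum.inl i := by
        intro k''; rw [hallk k'']; exact hi
      rw [hunivk, Finset.sum_singleton, hσb', hi, hi''] at hl2
      simp only [prefs18] at hl2
      have heq : a i = a i'' := by
        have h1 : (a i : ℝ) = a i'' := le_antisymm hl2 hl5
        exact_mod_cast h1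
      have hne : i ≠ i'' := by
        intro h
        exact absurd (π.symm.injective (hi.trans (h ▸ hi''.symm))) (by simp)
      exact two_case hn2 a i i'' hne heq
  · -- n/2 ≥ 2 : contradiction
    exfalso
    have hk'' : ∃ k'' : Fin (n / 2), k'' ≠ k' := by
      rcases Nat.eq_zero_or_pos k'.val with h | h
      · exact ⟨⟨1, by omega⟩, by simp [Fin.ext_iff, h]⟩
      · exact ⟨⟨0, by omega⟩, by simp [Fin.ext_iff]; omega⟩
    obtain ⟨k'', hk''⟩ := hk''
    rcases h : π.symm (Sum.inr (j', k'')) with i | c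
    · have hl1 := L1 hEF j' k'' k' hk''
      rw [h, hσb'] at hl1
      simp only [prefs18] at hl1
      have := hpos i
      have : (0:ℝ) < a i := by exact_mod_cast this
      linarith [hl1]
    · have hc : π (Sum.inr c) = Sum.inr (j', k'') := by rw [← h, π.apply_symm_apply]
      rcases fin2_cases b b' c hbb' with rfl | rfl
      · rw [hb] at hc; exact absurd hc (by simp)
      · rw [hb'] at hc
        injection hc with h2
        exact hk'' (congrArg Prod.snd h2).symm

end Fwd2
section Fwd3

variable {n : ℕ} {a : Fin n → ℕ} {π : (Fin n ⊕ Fin 2) ≃ StarSeats n}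

lemma case3 (hn : Even n) (hpos : ∀ i, 0 < a i)
    (hEF : envyFree (twoStars n) (prefs18 n a) π) (j0 j1 : Fin 2) (k0 k1 : Fin (n / 2))
    (h0 : π (Sum.inr 0) = Sum.inr (j0, k0)) (h1 : π (Sum.inr 1) = Sum.inr (j1, k1)) :
    ∃ I : Finset (Fin n), 2 * I.card = n ∧ 2 * ∑ x ∈ I, a x = ∑ x, a x := by
  have hσ0 : π.symm (Sum.inr (j0, k0)) = Sum.inr 0 := by rw [← h0, π.symm_apply_apply]
  have hσ1 : π.symm (Sum.inr (j1, k1)) = Sum.inr 1 := by rw [← h1, π.symm_apply_apply]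
  rcases Nat.lt_or_ge (n / 2) 2 with hm | hm
  · -- n = 2
    have hm1 : 1 ≤ n / 2 := k0.pos
    have hn2 : n = 2 := by obtain ⟨c, hc⟩ := hn; omega
    have hj01 : j0 ≠ j1 := by
      intro h
      have hkk : k0 = k1 := by
        apply Fin.ext; have := k0.isLt; have := k1.isLt; omega
      rw [h, hkk] at h0
      exact absurd (π.injective (h0.trans h1.symm)) (by simp)
    have hx : ∃ i, π.symm (Sum.inl j0) = Sum.inl i := by
      rcases h : π.symm (Sum.inl j0) with i | c
      · exact ⟨i, rfl⟩
      · exfalso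
        have hc : π (Sum.inr c) = Sum.inl j0 := by rw [← h, π.apply_symm_apply]
        rcases fin2_cases 0 1 c (by decide) with rfl | rfl
        · rw [h0] at hc; exact absurd hc (by simp)
        · rw [h1] at hc; exact absurd hc (by simp)
    obtain ⟨i, hi⟩ := hx
    have hx' : ∃ i'', π.symm (Sum.inl j1) = Sum.inl i'' := by
      rcases h : π.symm (Sum.inl j1) with i'' | c
      · exact ⟨i'', rfl⟩
      · exfalso
        have hc : π (Sum.inr c) = Sum.inl j1 := by rw [← h, π.apply_symm_apply]
        rcases fin2_cases 0 1 c (by decide) with rfl | rfl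
        · rw [h0] at hc; exact absurd hc (by simp)
        · rw [h1] at hc; exact absurd hc (by simp)
    obtain ⟨i'', hi''⟩ := hx'
    have hl4a := L4 hEF j0 j1 hj01 k0 k1
    rw [hσ0, hi, hi''] at hl4a
    simp only [prefs18] at hl4a
    have hl4b := L4 hEF j1 j0 hj01.symm k1 k0
    rw [hσ1, hi, hi''] at hl4b
    simp only [prefs18] at hl4b
    have heq : a i = a i'' := by
      have : (a i : ℝ) = a i'' := le_antisymm hl4b hl4a
      exact_mod_cast this
    have hne : i ≠ i'' := by
      intro h
      exact absurd (π.symm.injective (hi.trans (h ▸ hi''.symm))) (by simp [hj01])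
    exact two_case hn2 a i i'' hne heq
  · -- n/2 ≥ 2 : contradiction
    exfalso
    have hk : ∃ k : Fin (n / 2), k ≠ k0 := by
      rcases Nat.eq_zero_or_pos k0.val with h | h
      · exact ⟨⟨1, by omega⟩, by simp [Fin.ext_iff, h]⟩
      · exact ⟨⟨0, by omega⟩, by simp [Fin.ext_iff]; omega⟩
    obtain ⟨k, hk⟩ := hk
    rcases hw : π.symm (Sum.inr (j0, k)) with i | c
    · -- element next to center agent 0: contradiction with L1
      have hl1 := L1 hEF j0 k k0 hk
      rw [hw, hσ0] at hl1
      simp only [prefs18] at hl1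
      have := hpos i
      have : (0:ℝ) < a i := by exact_mod_cast this
      linarith [hl1]
    · -- it's the other center agent: both centers at leaves of star j0
      have hc : π (Sum.inr c) = Sum.inr (j0, k) := by rw [← hw, π.apply_symm_apply]
      rcases fin2_cases 0 1 c (by decide) with rfl | rfl
      · rw [h0] at hc
        injection hc with h2
        exact hk (congrArg Prod.snd h2).symm
      · -- π (inr 1) = inr (j0, k)
        obtain ⟨oj, hoj⟩ := fin2_exists_ne j0
        have hx : ∃ i0, π.symm (Sum.inl oj) = Sum.inl i0 := by
          rcases h : π.symm (Sum.inl oj) with i0 | c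
          · exact ⟨i0, rfl⟩
          · exfalso
            have hcc : π (Sum.inr c) = Sum.inl oj := by rw [← h, π.apply_symm_apply]
            rcases fin2_cases 0 1 c (by decide) with rfl | rfl
            · rw [h0] at hcc; exact absurd hcc (by simp)
            · rw [hc] at hcc; exact absurd hcc (by simp)
        obtain ⟨i0, hi0⟩ := hx
        have hu : ∃ i, π.symm (Sum.inr (oj, k0)) = Sum.inl i := by
          rcases h : π.symm (Sum.inr (oj, k0)) with i | c
          · exact ⟨i, rfl⟩
          · exfalso
            have hcc : π (Sum.inr c) = Sum.inr (oj, k0) := by rw [← h, π.apply_symm_apply]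
            rcases fin2_cases 0 1 c (by decide) with rfl | rfl
            · rw [h0] at hcc
              injection hcc with h2
              exact hoj (congrArg Prod.fst h2).symm
            · rw [hc] at hcc
              injection hcc with h2
              exact hoj (congrArg Prod.fst h2).symm
        obtain ⟨i, hi⟩ := hu
        have hl2 := L2 hEF oj j0 hoj k0
        rw [hi, hi0] at hl2
        have hterm : prefs18 n a (Sum.inl i) (π.symm (Sum.inr (j0, k0))) = a i := by
          rw [hσ0]; simp [prefs18]
        have hsingle : (a i : ℝ)
            ≤ ∑ k'' : Fin (n / 2), prefs18 n a (Sum.inl i) (π.symm (Sum.inr (j0, k''))) := by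
          rw [← hterm]
          exact Finset.single_le_sum (f := fun k'' => prefs18 n a (Sum.inl i) (π.symm (Sum.inr (j0, k'')))) (fun x _ => prefs_nonneg _ _) (Finset.mem_univ k0)
        have hrhs : prefs18 n a (Sum.inl i) (Sum.inl i0) = 0 := by simp [prefs18]
        rw [hrhs] at hl2
        have := hpos i
        have : (0:ℝ) < a i := by exact_mod_cast this
        linarith
  
end Fwd3
section Bwd

variable {n : ℕ}

lemma backward (hn : Even n) (a : Fin n → ℕ) (I : Finset (Fin n))
    (hcard : 2 * I.card = n) (hsum : 2 * ∑ x ∈ I, a x = ∑ x, a x) :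
    ∃ π : (Fin n ⊕ Fin 2) ≃ StarSeats n, envyFree (twoStars n) (prefs18 n a) π := by
  have hIc : I.card = n / 2 := by omega
  have hIcc : Iᶜ.card = n / 2 := by
    rw [Finset.card_compl, Fintype.card_fin]; omega
  set e1 := I.orderIsoOfFin hIc with he1
  set e2 := Iᶜ.orderIsoOfFin hIcc with he2
  set F0 : Fin 2 × Fin (n / 2) → Fin n :=
    fun jk => if jk.1 = 0 then (e1 jk.2 : Fin n) else (e2 jk.2 : Fin n) with hF0
  have hF0I : ∀ k, F0 (0, k) ∈ I := fun k => by simp [hF0]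
  have hF0Ic : ∀ k, F0 (1, k) ∈ Iᶜ := fun k => by simp [hF0]
  have hFinj : Function.Injective F0 := by
    rintro ⟨j, k⟩ ⟨j', k'⟩ h
    rcases fin2_cases 0 1 j (by decide) with rfl | rfl <;>
      rcases fin2_cases 0 1 j' (by decide) with rfl | rfl
    · simp only [hF0, if_pos rfl] at h
      have := e1.injective (Subtype.coe_injective h)
      rw [this]
    · exfalso
      have h1 := hF0I k
      have h2 := hF0Ic k'
      rw [h] at h1
      rw [Finset.mem_compl] at h2
      exact h2 h1
    · exfalso
      have h1 := hF0I k'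
      have h2 := hF0Ic k
      rw [← h] at h1
      rw [Finset.mem_compl] at h2
      exact h2 h1
    · simp only [hF0, if_neg (by decide : ¬ (1 : Fin 2) = 0)] at h
      have := e2.injective (Subtype.coe_injective h)
      rw [this]
  have hFbij : Function.Bijective F0 := by
    rw [Fintype.bijective_iff_injective_and_card]
    refine ⟨hFinj, ?_⟩
    simp only [Fintype.card_prod, Fintype.card_fin]
    omega
  set E := Equiv.ofBijective F0 hFbij with hE
  set π : (Fin n ⊕ Fin 2) ≃ StarSeats n :=
    { toFun := Sum.elim (fun i => Sum.inr (E.symm i)) (fun j => Sum.inl j)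
      invFun := Sum.elim (fun j => Sum.inr j) (fun l => Sum.inl (E l))
      left_inv := by rintro (i | j) <;> simp
      right_inv := by rintro (j | l) <;> simp } with hπ
  have hπl : ∀ i, π (Sum.inl i) = Sum.inr (E.symm i) := fun _ => rfl
  have hπr : ∀ b : Fin 2, π (Sum.inr b) = Sum.inl b := fun _ => rfl
  have hσl : ∀ b : Fin 2, π.symm (Sum.inl b) = Sum.inr b := fun _ => rfl
  have hσr : ∀ l, π.symm (Sum.inr l) = Sum.inl (E l) := fun _ => rfl
  -- the two center sums are equal
  have hsum0 : ∑ k, a (E (0, k)) = ∑ x ∈ I, a x := by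
    have h1 : ∀ k, E (0, k) = (e1 k : Fin n) := fun k => by
      simp [hE, Equiv.ofBijective_apply, hF0]
    calc ∑ k, a (E (0, k)) = ∑ k, a (e1 k) := by simp [h1]
      _ = ∑ x : ↥I, a x := Equiv.sum_comp e1.toEquiv (fun x : ↥I => a x)
      _ = ∑ x ∈ I, a x := Finset.sum_coe_sort I a
  have hsum1 : ∑ k, a (E (1, k)) = ∑ x ∈ Iᶜ, a x := by
    have h1 : ∀ k, E (1, k) = (e2 k : Fin n) := fun k => by
      simp [hE, Equiv.ofBijective_apply, hF0]
    calc ∑ k, a (E (1, k)) = ∑ k, a (e2 k) := by simp [h1]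
      _ = ∑ x : ↥(Iᶜ), a x := Equiv.sum_comp e2.toEquiv (fun x : ↥(Iᶜ) => a x)
      _ = ∑ x ∈ Iᶜ, a x := Finset.sum_coe_sort Iᶜ a
  have hcompl : ∑ x ∈ I, a x + ∑ x ∈ Iᶜ, a x = ∑ x, a x := Finset.sum_add_sum_compl I a
  have hSb : ∀ b b' : Fin 2, ∑ k, a (E (b, k)) = ∑ k, a (E (b', k)) := by
    have h01 : ∑ k, a (E (0, k)) = ∑ k, a (E (1, k)) := by omega
    intro b b'
    rcases fin2_cases 0 1 b (by decide) with rfl | rfl <;>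
      rcases fin2_cases 0 1 b' (by decide) with rfl | rfl <;> omega
  refine ⟨π, ?_⟩
  intro p q hpq
  rcases p with i | b
  · -- element agent: old utility is `a i`
    have hold : utility (twoStars n) (prefs18 n a) π (Sum.inl i) = a i := by
      rw [util_leaf _ π _ (E.symm i).1 (E.symm i).2 (hπl i), hσl]
      simp [prefs18]
    rw [hold]
    rcases q with i' | b
    · -- swap with another element: utility unchanged
      rw [util_swap_leaf _ _ _ (E.symm i').1 (E.symm i').2 (hπl i'), hσl,
        Equiv.swap_apply_of_ne_of_ne (by simp) (by simp)]
      simp [prefs18]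
    · -- swap with a center agent
      rw [util_swap_center _ _ _ b (hπr b)]
      have hbound : ∀ k : Fin (n / 2),
          prefs18 n a (Sum.inl i)
            (Equiv.swap (Sum.inl i) (Sum.inr b) (π.symm (Sum.inr (b, k))))
          ≤ if k = (E.symm i).2 then (a i : ℝ) else 0 := by
        intro k
        rw [hσr]
        by_cases h : E (b, k) = i
        · have hk : (b, k) = E.symm i := by rw [← h, Equiv.symm_apply_apply]
          rw [if_pos (by rw [← hk])]
          rw [h, Equiv.swap_apply_left]
          simp [prefs18]
        · rw [Equiv.swap_apply_of_ne_of_ne (by simp [h]) (by simp)]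
          have : (0:ℝ) ≤ if k = (E.symm i).2 then (a i : ℝ) else 0 := by
            split <;> simp
          simpa [prefs18] using this
      calc ∑ k : Fin (n / 2), prefs18 n a (Sum.inl i)
            (Equiv.swap (Sum.inl i) (Sum.inr b) (π.symm (Sum.inr (b, k))))
          ≤ ∑ k : Fin (n / 2), if k = (E.symm i).2 then (a i : ℝ) else 0 :=
            Finset.sum_le_sum (fun k _ => hbound k)
        _ = a i := by rw [Finset.sum_ite_eq' Finset.univ (E.symm i).2 (fun _ => (a i : ℝ))]
                      simp
  · -- center agent: old utility is the center sum
    have hold : utility (twoStars n) (prefs18 n a) π (Sum.inr b)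
        = ∑ k, (a (E (b, k)) : ℝ) := by
      rw [util_center _ π _ b (hπr b)]
      apply Finset.sum_congr rfl
      intro k _
      rw [hσr]
      simp [prefs18]
    rw [hold]
    rcases q with i | b'
    · -- swap with an element agent
      rw [util_swap_leaf _ _ _ (E.symm i).1 (E.symm i).2 (hπl i), hσl]
      by_cases h : (E.symm i).1 = b
      · rw [h, Equiv.swap_apply_left]
        have hi0 : E ((E.symm i).1, (E.symm i).2) = i := E.apply_symm_apply i
        rw [h] at hi0
        have hi : a i = a (E (b, (E.symm i).2)) := by rw [hi0]
        have : (a i : ℝ) ≤ ∑ k, (a (E (b, k)) : ℝ) := by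
          rw [hi]
          exact Finset.single_le_sum (f := fun k => (a (E (b, k)) : ℝ))
            (fun x _ => by positivity) (Finset.mem_univ (E.symm i).2)
        simpa [prefs18] using this
      · rw [Equiv.swap_apply_of_ne_of_ne (fun hh => h (Sum.inr.inj hh)) (by simp)]
        have : (0:ℝ) ≤ ∑ k, (a (E (b, k)) : ℝ) := by positivity
        simpa [prefs18] using this
    · -- swap with the other center agent: utility unchanged
      rw [util_swap_center _ _ _ b' (hπr b')]
      have : ∀ k : Fin (n / 2),
          prefs18 n a (Sum.inr b)
            (Equiv.swap (Sum.inr b) (Sum.inr b') (π.symm (Sum.inr (b', k))))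
          = (a (E (b', k)) : ℝ) := by
        intro k
        rw [hσr, Equiv.swap_apply_of_ne_of_ne (by simp) (by simp)]
        simp [prefs18]
      rw [Finset.sum_congr rfl (fun k _ => this k)]
      have := hSb b b'
      have hcast : (∑ k, (a (E (b', k)) : ℝ)) = ∑ k, (a (E (b, k)) : ℝ) := by
        exact_mod_cast congrArg (Nat.cast : ℕ → ℝ) (hSb b' b)
      rw [hcast]

end Bwd
/-- for even `n` and positive integers `a_1, …, a_n` with sum `W`, the above
symmetric instance has an envy-free arrangement if and only if the index set can be split
into two halves of size `n/2` each summing to `W/2`. -/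
theorem envyFree_iff_partition (n : ℕ) (hn : Even n)
    (a : Fin n → ℕ) (hpos : ∀ i, 0 < a i) :
    (∃ π : (Fin n ⊕ Fin 2) ≃ StarSeats n,
      envyFree (twoStars n) (prefs18 n a) π) ↔
    (∃ I : Finset (Fin n), 2 * I.card = n ∧ 2 * ∑ i ∈ I, a i = ∑ i, a i) := by
  constructor
  · rintro ⟨π, hEF⟩
    rcases h0 : π (Sum.inr 0) with j0 | ⟨j0, k0⟩ <;>
      rcases h1 : π (Sum.inr 1) with j1 | ⟨j1, k1⟩
    · exact case1 hn hEF j0 j1 h0 h1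
    · exact case2 hn hpos hEF 0 1 j0 j1 k1 (by decide) h0 h1
    · exact case2 hn hpos hEF 1 0 j1 j0 k0 (by decide) h1 h0
    · exact case3 hn hpos hEF j0 j1 k0 k1 h0 h1
  · rintro ⟨I, h1, h2⟩
    exact backward hn a I h1 h2
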